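/- For all 1 ≤ i, j, i', j' ≤ n, all 1 ≤ a, b ≤ d', and all integers k, l ≥ 0, the commutator in End_ℂ(Λ) satisfies ⁅G_a(i,j;k), G_b(i',j';l)⁆ = δ_{a,b}·( δ_{j,i'}·G_a(i,j';k+l) − δ_{i,j'}·G_a(i',j;k+l) ). (This is the fermionic even–even part of Proposition 4.2 of the paper: the operators E^{p+q+i}_{p+q+j} ⊗ t̄_{w_a}^k ↦ Σ_α x^{α+k}_i ∂_{x^α_j}, with x odd variables, realize the Takiff algebra relations of ⊕_{a=1}^{d'} gl_n[t_{w_a}]/t_{w_a}^{ξ_a} gl_n[t_{w_a}] on the fermionic Fock space; it underlies the fermionic duality of Corollary 4.6 (p=q=m=0).) -/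

import Mathlib

/-- The fermionic creation operator `a†_{α,i}`: left multiplication by the generator
`ι(e_{α,i})` of the exterior algebra on `(Fin d × Fin n) → ℂ`, where `e_{α,i}` is the
standard basis vector. -/
noncomputable def crea (d n : ℕ) (α : Fin d) (i : Fin n) :
    Module.End ℂ (ExteriorAlgebra ℂ ((Fin d × Fin n) → ℂ)) :=
  LinearMap.mulLeft ℂ (ExteriorAlgebra.ι ℂ (Pi.single (α, i) 1))

/-- The fermionic annihilation operator `a_{α,i}`: left contraction (interior product)
along the coordinate functional `ε_{α,i}`, i.e. `CliffordAlgebra.contractLeft` for the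
Clifford algebra of the zero quadratic form. -/
noncomputable def anni (d n : ℕ) (α : Fin d) (i : Fin n) :
    Module.End ℂ (ExteriorAlgebra ℂ ((Fin d × Fin n) → ℂ)) :=
  CliffordAlgebra.contractLeft (Q := (0 : QuadraticForm ℂ ((Fin d × Fin n) → ℂ)))
    (LinearMap.proj (α, i))

/-- The operator `G_a(i,j;k) = Σ_{α=D+1}^{D+ξ-k} a†_{α+k,i} ∘ a_{α,j}` on the fermionic
Fock space, where `D = d_a`, `ξ = ξ_a` (superscripts written 0-based, so `α` runs over
`D, D+1, …, D+ξ-k-1`). -/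
noncomputable def Gferm (d n : ℕ) (D ξ : ℕ) (i j : Fin n) (k : ℕ) :
    Module.End ℂ (ExteriorAlgebra ℂ ((Fin d × Fin n) → ℂ)) :=
  ∑ α ∈ Finset.range (ξ - k),
      if h : D + α + k < d then
        crea d n ⟨D + α + k, h⟩ i * anni d n ⟨D + α, by omega⟩ j
      else 0

/-! ### Auxiliary lemmas: canonical anticommutation relations -/

lemma car_ac (d n : ℕ) (u v : Fin d) (i j : Fin n) :
    anni d n u i * crea d n v j + crea d n v j * anni d n u i
      = if u = v ∧ i = j then 1 else 0 := by
  apply LinearMap.ext; intro x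
  simp only [LinearMap.add_apply, Module.End.mul_apply, crea, anni, LinearMap.mulLeft_apply]
  rw [CliffordAlgebra.contractLeft_ι_mul]
  simp only [sub_add_cancel]
  have : (LinearMap.proj (R := ℂ) (φ := fun _ : Fin d × Fin n => ℂ) (u, i))
      (Pi.single (v, j) 1) = if u = v ∧ i = j then 1 else 0 := by
    simp [LinearMap.proj_apply, Pi.single_apply, Prod.mk.injEq]
  rw [this]
  split_ifs <;> simp

lemma car_cc (d n : ℕ) (u v : Fin d) (i j : Fin n) :
    crea d n u i * crea d n v j + crea d n v j * crea d n u i = 0 := by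
  apply LinearMap.ext; intro x
  simp only [LinearMap.add_apply, Module.End.mul_apply, crea, LinearMap.mulLeft_apply,
    LinearMap.zero_apply]
  rw [← mul_assoc, ← mul_assoc, ← add_mul, ExteriorAlgebra.ι_add_mul_swap, zero_mul]

lemma car_aa (d n : ℕ) (u v : Fin d) (i j : Fin n) :
    anni d n u i * anni d n v j + anni d n v j * anni d n u i = 0 := by
  apply LinearMap.ext; intro x
  simp only [LinearMap.add_apply, Module.End.mul_apply, anni, LinearMap.zero_apply]
  rw [CliffordAlgebra.contractLeft_comm]
  simp

/-! ### ℕ-indexed operators (zero out of range) -/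

noncomputable def creaN (d n : ℕ) (p : ℕ) (i : Fin n) :
    Module.End ℂ (ExteriorAlgebra ℂ ((Fin d × Fin n) → ℂ)) :=
  if h : p < d then crea d n ⟨p, h⟩ i else 0

noncomputable def anniN (d n : ℕ) (p : ℕ) (j : Fin n) :
    Module.End ℂ (ExteriorAlgebra ℂ ((Fin d × Fin n) → ℂ)) :=
  if h : p < d then anni d n ⟨p, h⟩ j else 0

lemma creaN_of_ge (d n : ℕ) (p : ℕ) (i : Fin n) (h : ¬ p < d) : creaN d n p i = 0 :=
  dif_neg h

lemma carN_ac (d n : ℕ) (p q : ℕ) (i j : Fin n) :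
    anniN d n p i * creaN d n q j + creaN d n q j * anniN d n p i
      = if p = q ∧ i = j ∧ p < d then 1 else 0 := by
  unfold anniN creaN
  by_cases h1 : p < d
  · by_cases h2 : q < d
    · rw [dif_pos h1, dif_pos h2, car_ac]
      congr 1
      simp only [Fin.mk.injEq, eq_iff_iff]
      constructor
      · rintro ⟨h, h'⟩; exact ⟨h, h', h1⟩
      · rintro ⟨h, h', -⟩; exact ⟨h, h'⟩
    · rw [dif_pos h1, dif_neg h2, if_neg (by rintro ⟨rfl, -, -⟩; exact h2 h1)]
      simp
  · rw [dif_neg h1, if_neg (by rintro ⟨-, -, h⟩; exact h1 h)]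
    simp

lemma carN_cc (d n : ℕ) (p q : ℕ) (i j : Fin n) :
    creaN d n p i * creaN d n q j + creaN d n q j * creaN d n p i = 0 := by
  unfold creaN
  split_ifs with h1 h2 h2 <;> simp [car_cc]

lemma carN_aa (d n : ℕ) (p q : ℕ) (i j : Fin n) :
    anniN d n p i * anniN d n q j + anniN d n q j * anniN d n p i = 0 := by
  unfold anniN
  split_ifs with h1 h2 h2 <;> simp [car_aa]

lemma comm4 {R : Type*} [Ring R] (cp aq cr as e e' : R)
    (h1 : aq * cr + cr * aq = e) (h1' : as * cp + cp * as = e')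
    (h2 : cp * cr + cr * cp = 0) (h3 : as * aq + aq * as = 0)
    (hec : ∀ x, x * e = e * x) (he'c : ∀ x, x * e' = e' * x) :
    cp * aq * (cr * as) - cr * as * (cp * aq)
      = e * (cp * as) - e' * (cr * aq) := by
  have k1 : aq * cr = e - cr * aq := by rw [eq_sub_iff_add_eq]; exact h1
  have k1' : as * cp = e' - cp * as := by rw [eq_sub_iff_add_eq]; exact h1'
  have k2 : cp * cr = -(cr * cp) := by rw [eq_neg_iff_add_eq_zero]; exact h2
  have k3 : as * aq = -(aq * as) := by rw [eq_neg_iff_add_eq_zero]; exact h3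
  calc cp * aq * (cr * as) - cr * as * (cp * aq)
      = cp * (aq * cr) * as - cr * (as * cp) * aq := by noncomm_ring
    _ = cp * (e - cr * aq) * as - cr * (e' - cp * as) * aq := by rw [k1, k1']
    _ = (cp * e) * as - (cp * cr) * (aq * as) - ((cr * e') * aq - (cr * cp) * (as * aq)) := by
        noncomm_ring
    _ = (e * cp) * as - (-(cr * cp)) * (aq * as)
        - ((e' * cr) * aq - (cr * cp) * (-(aq * as))) := by rw [hec, k2, he'c, k3]
    _ = e * (cp * as) - e' * (cr * aq) := by noncomm_ring

lemma keyN (d n : ℕ) (p q r s : ℕ) (i j i' j' : Fin n) :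
    creaN d n p i * anniN d n q j * (creaN d n r i' * anniN d n s j')
      - creaN d n r i' * anniN d n s j' * (creaN d n p i * anniN d n q j)
    = (if q = r ∧ j = i' ∧ q < d then creaN d n p i * anniN d n s j' else 0)
      - (if s = p ∧ j' = i ∧ s < d then creaN d n r i' * anniN d n q j else 0) := by
  rw [comm4 _ _ _ _ _ _ (carN_ac d n q r j i') (carN_ac d n s p j' i)
      (carN_cc d n p r i i') (carN_aa d n s q j' j)
      (by intro x; split_ifs <;> simp) (by intro x; split_ifs <;> simp)]
  congr 1 <;> split_ifs <;> simp

lemma Gferm_eq (d n D ξ : ℕ) (i j : Fin n) (k : ℕ) :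
    Gferm d n D ξ i j k
      = ∑ α ∈ Finset.range (ξ - k), creaN d n (D + α + k) i * anniN d n (D + α) j := by
  unfold Gferm creaN anniN
  refine Finset.sum_congr rfl fun α _ => ?_
  split_ifs with h1 h2 h2
  · rfl
  · omega
  · simp
  · simp

lemma sumS1 (d n : ℕ) (Da ξa : ℕ) (i j i' j' : Fin n) (k l : ℕ) :
    ∑ α ∈ Finset.range (ξa - k), ∑ β ∈ Finset.range (ξa - l),
      (if Da + α = Da + β + l ∧ j = i' ∧ Da + α < d then
          creaN d n (Da + α + k) i * anniN d n (Da + β) j' else 0)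
    = if j = i' then Gferm d n Da ξa i j' (k + l) else 0 := by
  rw [Gferm_eq]
  by_cases hji : j = i'
  · subst hji
    rw [if_pos rfl]
    have step1 : ∀ α ∈ Finset.range (ξa - k), ∀ β ∈ Finset.range (ξa - l),
        (if Da + α = Da + β + l ∧ j = j ∧ Da + α < d then
            creaN d n (Da + α + k) i * anniN d n (Da + β) j' else 0)
        = (if α = β + l then creaN d n (Da + α + k) i * anniN d n (Da + β) j' else 0) := by
      intro α _ β _
      by_cases hd : Da + α < d
      · split_ifs with h1 h2 h2 <;> first | rfl | omega
      · have hz : creaN d n (Da + α + k) i = 0 := creaN_of_ge d n _ i (by omega)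
        simp [hz]
    rw [Finset.sum_congr rfl fun α hα => Finset.sum_congr rfl (step1 α hα)]
    rw [Finset.sum_comm]
    have step2 : ∀ β ∈ Finset.range (ξa - l),
        (∑ α ∈ Finset.range (ξa - k),
          if α = β + l then creaN d n (Da + α + k) i * anniN d n (Da + β) j' else 0)
        = if β + l < ξa - k then
            creaN d n (Da + (β + l) + k) i * anniN d n (Da + β) j' else 0 := by
      intro β _
      rw [Finset.sum_ite_eq' (Finset.range (ξa - k)) (β + l)
        (fun α => creaN d n (Da + α + k) i * anniN d n (Da + β) j')]
      simp [Finset.mem_range]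
    rw [Finset.sum_congr rfl step2]
    rw [← Finset.sum_subset (Finset.range_subset_range.mpr (show ξa - (k + l) ≤ ξa - l by omega))
      (fun β hβ hβ' => by
        rw [if_neg]
        simp only [Finset.mem_range] at hβ hβ'
        omega)]
    refine Finset.sum_congr rfl fun β hβ => ?_
    simp only [Finset.mem_range] at hβ
    rw [if_pos (by omega)]
    congr 2
    omega
  · rw [if_neg hji]
    refine Finset.sum_eq_zero fun α _ => Finset.sum_eq_zero fun β _ => if_neg ?_
    rintro ⟨-, h, -⟩; exact hji h

lemma sumS2 (d n : ℕ) (Da ξa : ℕ) (i j i' j' : Fin n) (k l : ℕ) :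
    ∑ α ∈ Finset.range (ξa - k), ∑ β ∈ Finset.range (ξa - l),
      (if Da + β = Da + α + k ∧ j' = i ∧ Da + β < d then
          creaN d n (Da + β + l) i' * anniN d n (Da + α) j else 0)
    = if i = j' then Gferm d n Da ξa i' j (k + l) else 0 := by
  rw [Gferm_eq]
  by_cases hij : i = j'
  · subst hij
    rw [if_pos rfl]
    have step1 : ∀ α ∈ Finset.range (ξa - k), ∀ β ∈ Finset.range (ξa - l),
        (if Da + β = Da + α + k ∧ i = i ∧ Da + β < d then
            creaN d n (Da + β + l) i' * anniN d n (Da + α) j else 0)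
        = (if β = α + k then creaN d n (Da + β + l) i' * anniN d n (Da + α) j else 0) := by
      intro α _ β _
      by_cases hd : Da + β < d
      · split_ifs with h1 h2 h2 <;> first | rfl | omega
      · have hz : creaN d n (Da + β + l) i' = 0 := creaN_of_ge d n _ i' (by omega)
        simp [hz]
    rw [Finset.sum_congr rfl fun α hα => Finset.sum_congr rfl (step1 α hα)]
    have step2 : ∀ α ∈ Finset.range (ξa - k),
        (∑ β ∈ Finset.range (ξa - l),
          if β = α + k then creaN d n (Da + β + l) i' * anniN d n (Da + α) j else 0)
        = if α + k < ξa - l then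
            creaN d n (Da + (α + k) + l) i' * anniN d n (Da + α) j else 0 := by
      intro α _
      rw [Finset.sum_ite_eq' (Finset.range (ξa - l)) (α + k)
        (fun β => creaN d n (Da + β + l) i' * anniN d n (Da + α) j)]
      simp [Finset.mem_range]
    rw [Finset.sum_congr rfl step2]
    rw [← Finset.sum_subset (Finset.range_subset_range.mpr (show ξa - (k + l) ≤ ξa - k by omega))
      (fun α hα hα' => by
        rw [if_neg]
        simp only [Finset.mem_range] at hα hα'
        omega)]
    refine Finset.sum_congr rfl fun α hα => ?_
    simp only [Finset.mem_range] at hα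
    rw [if_pos (by omega)]
    congr 2
    omega
  · rw [if_neg hij]
    refine Finset.sum_eq_zero fun α _ => Finset.sum_eq_zero fun β _ => if_neg ?_
    rintro ⟨-, h, -⟩; exact hij h.symm

/-- On the fermionic Fock space, the operators `G_a(i,j;k)` realize
the Takiff algebra relations of `⊕_{a=1}^{d'} gl_n[t_{w_a}]/t_{w_a}^{ξ_a} gl_n[t_{w_a}]`:
`⁅G_a(i,j;k), G_b(i',j';l)⁆ = δ_{ab} (δ_{j i'} G_a(i,j';k+l) - δ_{i j'} G_a(i',j;k+l))`. -/
theorem stmt14 (n : ℕ) (hn : 1 ≤ n) (d' : ℕ) (hd' : 1 ≤ d')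
    (ξ : Fin d' → ℕ) (hξ : ∀ a, 0 < ξ a) (d : ℕ) (hd : d = ∑ a, ξ a)
    (D : Fin d' → ℕ)
    (hD : ∀ a, D a = ∑ b ∈ Finset.univ.filter (fun b => b < a), ξ b)
    (a b : Fin d') (i j i' j' : Fin n) (k l : ℕ) :
    Gferm d n (D a) (ξ a) i j k * Gferm d n (D b) (ξ b) i' j' l
      - Gferm d n (D b) (ξ b) i' j' l * Gferm d n (D a) (ξ a) i j k
    = if a = b then
        (if j = i' then Gferm d n (D a) (ξ a) i j' (k + l) else 0)
          - (if i = j' then Gferm d n (D a) (ξ a) i' j (k + l) else 0)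
      else 0 := by
  have hmono : ∀ c e : Fin d', c < e → D c + ξ c ≤ D e := by
    intro c e hce
    rw [hD, hD]
    have hc : c ∉ Finset.univ.filter (fun b => b < c) := by simp
    have hsub : insert c (Finset.univ.filter (fun b => b < c))
        ⊆ Finset.univ.filter (fun b => b < e) := by
      intro x hx
      simp only [Finset.mem_insert, Finset.mem_filter, Finset.mem_univ, true_and] at hx ⊢
      rcases hx with rfl | hx
      · exact hce
      · exact lt_trans hx hce
    calc (∑ b ∈ Finset.univ.filter (fun b => b < c), ξ b) + ξ c
        = ∑ b ∈ insert c (Finset.univ.filter (fun b => b < c)), ξ b := by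
          rw [Finset.sum_insert hc]; ring
      _ ≤ _ := Finset.sum_le_sum_of_subset hsub
  have hdisj : ∀ (c e : Fin d'), c ≠ e → ∀ (x y : ℕ), x < ξ c → y < ξ e →
      D c + x ≠ D e + y := by
    intro c e hne x y hx hy
    rcases lt_or_gt_of_ne hne with h | h
    · have := hmono c e h; omega
    · have := hmono e c h; omega
  rw [Gferm_eq d n (D a) (ξ a) i j k, Gferm_eq d n (D b) (ξ b) i' j' l]
  rw [Finset.sum_mul_sum, Finset.sum_mul_sum, Finset.sum_comm (s := Finset.range (ξ b - l))]
  rw [← Finset.sum_sub_distrib]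
  rw [Finset.sum_congr rfl fun α _ => (Finset.sum_sub_distrib
    (s := Finset.range (ξ b - l)) _ _).symm]
  rw [Finset.sum_congr rfl fun α _ => Finset.sum_congr rfl fun β _ =>
    keyN d n (D a + α + k) (D a + α) (D b + β + l) (D b + β) i j i' j']
  rw [Finset.sum_congr rfl fun α _ => Finset.sum_sub_distrib
    (s := Finset.range (ξ b - l)) _ _, Finset.sum_sub_distrib]
  by_cases hab : a = b
  · subst hab
    rw [if_pos rfl, sumS1 d n (D a) (ξ a) i j i' j' k l, sumS2 d n (D a) (ξ a) i j i' j' k l]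
  · rw [if_neg hab]
    have z1 : (∑ α ∈ Finset.range (ξ a - k), ∑ β ∈ Finset.range (ξ b - l),
        (if D a + α = D b + β + l ∧ j = i' ∧ D a + α < d then
          creaN d n (D a + α + k) i * anniN d n (D b + β) j' else 0)) = 0 := by
      refine Finset.sum_eq_zero fun α hα => Finset.sum_eq_zero fun β hβ => if_neg ?_
      simp only [Finset.mem_range] at hα hβ
      rintro ⟨h, -, -⟩
      exact hdisj a b hab α (β + l) (by omega) (by omega) (by omega)
    have z2 : (∑ α ∈ Finset.range (ξ a - k), ∑ β ∈ Finset.range (ξ b - l),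
        (if D b + β = D a + α + k ∧ j' = i ∧ D b + β < d then
          creaN d n (D b + β + l) i' * anniN d n (D a + α) j else 0)) = 0 := by
      refine Finset.sum_eq_zero fun α hα => Finset.sum_eq_zero fun β hβ => if_neg ?_
      simp only [Finset.mem_range] at hα hβ
      rintro ⟨h, -, -⟩
      exact hdisj b a (Ne.symm hab) β (α + k) (by omega) (by omega) (by omega)
    rw [z1, z2, sub_zero]
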